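/- Let A, H, N be real symmetric n×n matrices such that A = H − N, A is positive semidefinite, N is positive semidefinite, and let ρ ∈ (0,1) satisfy ⟨N v, v⟩ ≤ ρ · ⟨H v, v⟩ for all v ∈ ℝⁿ. Suppose λ₁, λ₂ ∈ ℝ and v₁, v₂ ∈ ℝⁿ satisfy A v₁ = λ₁ · (H v₁), A v₂ = λ₂ · (H v₂), ⟨A v₁, v₁⟩ > 0, and ⟨A v₂, v₂⟩ > 0. Then λ₂ > 0 and λ₁ / λ₂ ≤ 1 / (1 − ρ). -/

import Mathlib

open Matrix

/-- Condition number bound: under the spectral-equivalence hypotheses, the ratio of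
any two nonzero generalized eigenvalues of the pencil `(A, H)` is at most
`1 / (1 − ρ)`. -/
theorem condition_number_bound (n : ℕ)
    (A H N : Matrix (Fin n) (Fin n) ℝ)
    (hH : H.IsSymm) (hAHN : A = H - N)
    (hA : A.PosSemidef) (hN : N.PosSemidef)
    (ρ : ℝ) (hρ0 : 0 < ρ) (hρ1 : ρ < 1)
    (hbound : ∀ v : Fin n → ℝ, N.mulVec v ⬝ᵥ v ≤ ρ * (H.mulVec v ⬝ᵥ v))
    (lam₁ lam₂ : ℝ) (v₁ v₂ : Fin n → ℝ)
    (h₁ : A.mulVec v₁ = lam₁ • H.mulVec v₁)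
    (h₂ : A.mulVec v₂ = lam₂ • H.mulVec v₂)
    (hpos₁ : 0 < A.mulVec v₁ ⬝ᵥ v₁) (hpos₂ : 0 < A.mulVec v₂ ⬝ᵥ v₂) :
    0 < lam₂ ∧ lam₁ / lam₂ ≤ 1 / (1 - ρ) := by
  -- basic quadratic-form facts
  have hsplit : ∀ v : Fin n → ℝ,
      A.mulVec v ⬝ᵥ v = H.mulVec v ⬝ᵥ v - N.mulVec v ⬝ᵥ v := by
    intro v
    rw [hAHN, sub_mulVec, sub_dotProduct]
  have hN1 : (0:ℝ) ≤ N.mulVec v₁ ⬝ᵥ v₁ := by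
    simpa [dotProduct_comm] using hN.dotProduct_mulVec_nonneg v₁
  have hN2 : (0:ℝ) ≤ N.mulVec v₂ ⬝ᵥ v₂ := by
    simpa [dotProduct_comm] using hN.dotProduct_mulVec_nonneg v₂
  have hH1 : 0 < H.mulVec v₁ ⬝ᵥ v₁ := by
    have := hsplit v₁; nlinarith
  have hH2 : 0 < H.mulVec v₂ ⬝ᵥ v₂ := by
    have := hsplit v₂; nlinarith
  have e1 : A.mulVec v₁ ⬝ᵥ v₁ = lam₁ * (H.mulVec v₁ ⬝ᵥ v₁) := by
    rw [h₁, smul_dotProduct, smul_eq_mul]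
  have e2 : A.mulVec v₂ ⬝ᵥ v₂ = lam₂ * (H.mulVec v₂ ⬝ᵥ v₂) := by
    rw [h₂, smul_dotProduct, smul_eq_mul]
  -- λ₁ ≤ 1
  have hl1 : lam₁ ≤ 1 := by
    have := hsplit v₁
    nlinarith
  -- λ₂ ≥ 1 - ρ
  have hl2 : 1 - ρ ≤ lam₂ := by
    have hb := hbound v₂
    have hs := hsplit v₂
    nlinarith
  have hl2pos : 0 < lam₂ := lt_of_lt_of_le (by linarith) hl2
  refine ⟨hl2pos, ?_⟩
  rw [div_le_div_iff₀ hl2pos (by linarith)]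
  nlinarith
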